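/- Let μ = N(α, Σ) be a nondegenerate Gaussian on ℝ^d and Q, K ∈ ℝ^{d×d}. Then the L2 self-attention velocity field satisfies Γ_μ^{L2}(x) = ∫ Vy·e^{−‖Qx−Ky‖²} dμ(y) / ∫ e^{−‖Qx−Ky‖²} dμ(y) = V(Σ⁻¹ + 2KᵀK)⁻¹(Σ⁻¹α + 2KᵀQ x) for all x ∈ ℝ^d. -/

import Mathlib

open MeasureTheory Matrix

lemma quad_cont {d : ℕ} (A : Matrix (Fin d) (Fin d) ℝ) :
    Continuous fun z : Fin d → ℝ => z ⬝ᵥ A.mulVec z := by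
  simp only [dotProduct, Matrix.mulVec]
  continuity

lemma quad_smul {d : ℕ} (A : Matrix (Fin d) (Fin d) ℝ) (t : ℝ) (z : Fin d → ℝ) :
    (t • z) ⬝ᵥ A.mulVec (t • z) = t ^ 2 * (z ⬝ᵥ A.mulVec z) := by
  rw [Matrix.mulVec_smul, dotProduct_smul, smul_dotProduct]
  simp [smul_eq_mul]; ring

lemma quad_lower {d : ℕ} {A : Matrix (Fin d) (Fin d) ℝ} (hA : A.PosDef) :
    ∃ c > 0, ∀ z : Fin d → ℝ, c * ‖z‖ ^ 2 ≤ z ⬝ᵥ A.mulVec z := by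
  rcases Nat.eq_zero_or_pos d with hd | hd
  · refine ⟨1, one_pos, fun z => ?_⟩
    subst hd
    have h0 : z = 0 := Subsingleton.elim z 0
    rw [h0, norm_zero]
    simp [dotProduct]
  · haveI : Nonempty (Fin d) := ⟨⟨0, hd⟩⟩
    obtain ⟨z1, hz1⟩ := exists_norm_eq (Fin d → ℝ) (le_of_lt one_pos)
    obtain ⟨z0, hz0, hmin⟩ := (isCompact_sphere (0 : Fin d → ℝ) 1).exists_isMinOn
      ⟨z1, by simpa using hz1⟩ (quad_cont A).continuousOn
    have hz0n : ‖z0‖ = 1 := by simpa using hz0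
    have hz0ne : z0 ≠ 0 := fun h => by simp [h] at hz0n
    have hc : 0 < z0 ⬝ᵥ A.mulVec z0 := by simpa using hA.dotProduct_mulVec_pos hz0ne
    refine ⟨_, hc, fun z => ?_⟩
    rcases eq_or_ne z 0 with rfl | hz
    · simp [dotProduct]
    · have hnz : (0:ℝ) < ‖z‖ := norm_pos_iff.mpr hz
      have hw : ‖(‖z‖⁻¹ • z)‖ = 1 := by
        rw [norm_smul]; simp [abs_of_pos hnz, inv_mul_cancel₀ hnz.ne']
      have := hmin (by simpa using hw : (‖z‖⁻¹ • z) ∈ Metric.sphere (0 : Fin d → ℝ) 1)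
      have h2 : z0 ⬝ᵥ A.mulVec z0 ≤ (‖z‖⁻¹ • z) ⬝ᵥ A.mulVec (‖z‖⁻¹ • z) := this
      rw [quad_smul] at h2
      have h3 : (‖z‖⁻¹)^2 = (‖z‖^2)⁻¹ := by rw [inv_pow]
      rw [h3] at h2
      have h4 : (z0 ⬝ᵥ A.mulVec z0) * ‖z‖^2 ≤ z ⬝ᵥ A.mulVec z := by
        have hp : (0:ℝ) < ‖z‖^2 := by positivity
        calc (z0 ⬝ᵥ A.mulVec z0) * ‖z‖^2 ≤ ((‖z‖^2)⁻¹ * (z ⬝ᵥ A.mulVec z)) * ‖z‖^2 := by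
              exact mul_le_mul_of_nonneg_right h2 hp.le
          _ = z ⬝ᵥ A.mulVec z := by field_simp
      linarith

lemma sum_sq_le {d : ℕ} (z : Fin d → ℝ) : ∑ i, z i ^ 2 ≤ (d : ℝ) * ‖z‖ ^ 2 := by
  calc ∑ i, z i ^ 2 ≤ ∑ _i : Fin d, ‖z‖ ^ 2 := by
        apply Finset.sum_le_sum
        intro i _
        have := norm_le_pi_norm z i
        have h0 : (0:ℝ) ≤ ‖z i‖ := norm_nonneg _
        calc z i ^ 2 = ‖z i‖ ^ 2 := by rw [Real.norm_eq_abs, sq_abs]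
          _ ≤ ‖z‖ ^ 2 := by nlinarith [norm_nonneg z]
    _ = (d : ℝ) * ‖z‖ ^ 2 := by simp [Finset.sum_const, nsmul_eq_mul]

lemma norm_le_prod {d : ℕ} (z : Fin d → ℝ) : ‖z‖ ≤ ∏ i, (1 + |z i|) := by
  have hnn : (0:ℝ) ≤ ∏ i, (1 + |z i|) :=
    Finset.prod_nonneg fun i _ => by positivity
  rw [pi_norm_le_iff_of_nonneg hnn]
  intro i
  have hsplit : ∏ j, (1 + |z j|) = (1 + |z i|) * ∏ j ∈ Finset.univ.erase i, (1 + |z j|) :=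
    (Finset.mul_prod_erase Finset.univ _ (Finset.mem_univ i)).symm
  have hone : (1:ℝ) ≤ ∏ j ∈ Finset.univ.erase i, (1 + |z j|) :=
    by
    have := Finset.prod_le_prod (s := Finset.univ.erase i) (f := fun _ => (1:ℝ))
      (g := fun j => 1 + |z j|) (fun j _ => zero_le_one)
      (fun j _ => by show (1:ℝ) ≤ 1 + |z j|; linarith [abs_nonneg (z j)])
    simpa using this
  have h1 : (1 : ℝ) + |z i| ≤ ∏ j, (1 + |z j|) := by
    rw [hsplit]
    exact le_mul_of_one_le_right (by positivity) hone
  have h2 : |z i| ≤ 1 + |z i| := by linarith [abs_nonneg (z i)]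
  rw [Real.norm_eq_abs]
  linarith

lemma exp_quad_le {d : ℕ} {A : Matrix (Fin d) (Fin d) ℝ} {c : ℝ} (hc : 0 < c)
    (hq : ∀ z : Fin d → ℝ, c * ‖z‖ ^ 2 ≤ z ⬝ᵥ A.mulVec z) (z : Fin d → ℝ) :
    Real.exp (-(1/2) * (z ⬝ᵥ A.mulVec z)) ≤ ∏ i, Real.exp (-(c/(2*(d+1))) * z i ^ 2) := by
  rw [← Real.exp_sum]
  apply Real.exp_le_exp.mpr
  have h1 := sum_sq_le z
  have h2 := hq z
  have h3 : ∑ i, -(c/(2*(d+1))) * z i ^ 2 = -(c/(2*(d+1))) * ∑ i, z i ^ 2 := by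
    rw [Finset.mul_sum]
  rw [h3]
  have hd1 : (0:ℝ) < (d:ℝ) + 1 := by positivity
  have hdd : (d:ℝ) ≤ (d:ℝ) + 1 := by linarith
  have hn : (0:ℝ) ≤ ∑ i, z i ^ 2 := Finset.sum_nonneg fun i _ => sq_nonneg _
  -- -(c/(2(d+1))) * Σ ≥ -(c/2)‖z‖²  since Σ ≤ d‖z‖²
  have : c / (2*((d:ℝ)+1)) * (∑ i, z i ^ 2) ≤ (c/2) * ‖z‖^2 := by
    have hle : (∑ i, z i ^ 2) ≤ ((d:ℝ)+1) * ‖z‖^2 := by nlinarith [norm_nonneg z]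
    calc c / (2*((d:ℝ)+1)) * (∑ i, z i ^ 2) ≤ c / (2*((d:ℝ)+1)) * (((d:ℝ)+1) * ‖z‖^2) := by
          apply mul_le_mul_of_nonneg_left hle (by positivity)
      _ = (c/2) * ‖z‖^2 := by field_simp

  nlinarith

lemma integrable_exp_quad {d : ℕ} {A : Matrix (Fin d) (Fin d) ℝ} (hA : A.PosDef) :
    Integrable (fun z : Fin d → ℝ => Real.exp (-(1/2) * (z ⬝ᵥ A.mulVec z))) := by
  obtain ⟨c, hc, hq⟩ := quad_lower hA
  have hc2 : (0:ℝ) < c/(2*(d+1)) := by positivity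
  have hb : Integrable (fun z : Fin d → ℝ => ∏ i, Real.exp (-(c/(2*(d+1))) * z i ^ 2)) :=
    Integrable.fintype_prod fun i => integrable_exp_neg_mul_sq hc2
  refine hb.mono' ?_ ?_
  · exact (Real.continuous_exp.comp ((continuous_const.mul (quad_cont A)))).aestronglyMeasurable
  · filter_upwards with z
    rw [Real.norm_eq_abs, abs_of_pos (Real.exp_pos _)]
    exact exp_quad_le hc hq z

lemma integrable_exp_quad_smul {d : ℕ} {A : Matrix (Fin d) (Fin d) ℝ} (hA : A.PosDef) :
    Integrable (fun z : Fin d → ℝ => Real.exp (-(1/2) * (z ⬝ᵥ A.mulVec z)) • z) := by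
  obtain ⟨c, hc, hq⟩ := quad_lower hA
  have hc2 : (0:ℝ) < c/(2*(d+1)) := by positivity
  have hb : Integrable (fun z : Fin d → ℝ =>
      ∏ i, (Real.exp (-(c/(2*(d+1))) * z i ^ 2) * (1 + |z i|))) := by
    apply Integrable.fintype_prod (f := fun _ (t:ℝ) => Real.exp (-(c/(2*(d+1))) * t ^ 2) * (1 + |t|))
    intro i
    have h1 : Integrable (fun t : ℝ => Real.exp (-(c/(2*(d+1))) * t ^ 2)) :=
      integrable_exp_neg_mul_sq hc2
    have h2 : Integrable (fun t : ℝ => Real.exp (-(c/(2*(d+1))) * t ^ 2) * |t|) := by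
      have := (integrable_mul_exp_neg_mul_sq hc2).abs
      apply this.congr
      filter_upwards with t
      rw [abs_mul, abs_of_pos (Real.exp_pos _)]
      ring
    have := h1.add h2
    apply this.congr
    filter_upwards with t
    simp only [Pi.add_apply]
    ring
  refine hb.mono' ?_ ?_
  · exact ((Real.continuous_exp.comp ((continuous_const.mul (quad_cont A)))).smul
      continuous_id).aestronglyMeasurable
  · filter_upwards with z
    rw [norm_smul, Real.norm_eq_abs, abs_of_pos (Real.exp_pos _)]
    have h1 := exp_quad_le hc hq z
    have h2 := norm_le_prod z
    calc Real.exp (-(1/2) * (z ⬝ᵥ A.mulVec z)) * ‖z‖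
        ≤ (∏ i, Real.exp (-(c/(2*(d+1))) * z i ^ 2)) * (∏ i, (1 + |z i|)) := by
          apply mul_le_mul h1 h2 (norm_nonneg _) (Finset.prod_nonneg fun i _ => (Real.exp_pos _).le)
      _ = ∏ i, (Real.exp (-(c/(2*(d+1))) * z i ^ 2) * (1 + |z i|)) := by
          rw [← Finset.prod_mul_distrib]

lemma integral_exp_quad_smul_zero {d : ℕ} (A : Matrix (Fin d) (Fin d) ℝ) :
    ∫ z : Fin d → ℝ, Real.exp (-(1/2) * (z ⬝ᵥ A.mulVec z)) • z = 0 := by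
  set f : (Fin d → ℝ) → (Fin d → ℝ) := fun z => Real.exp (-(1/2) * (z ⬝ᵥ A.mulVec z)) • z with hf
  have h := integral_neg_eq_self f volume
  have h2 : ∀ z, f (-z) = -(f z) := by
    intro z
    rw [hf]
    simp only [Matrix.mulVec_neg, neg_dotProduct, dotProduct_neg, neg_neg, smul_neg]
  rw [show (fun z => f (-z)) = fun z => -(f z) from funext h2] at h
  rw [integral_neg] at h
  have h3 : (2:ℝ) • (∫ z, f z) = 0 := by
    rw [two_smul]
    nth_rewrite 1 [← h]
    exact neg_add_cancel _
  have := smul_eq_zero.mp h3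
  rcases this with h4 | h4
  · norm_num at h4
  · exact h4

lemma key_integral {d : ℕ} {A : Matrix (Fin d) (Fin d) ℝ} (hA : A.PosDef) (m : Fin d → ℝ) :
    ∫ y : Fin d → ℝ, Real.exp (-(1/2) * ((y - m) ⬝ᵥ A.mulVec (y - m))) • y
      = (∫ y : Fin d → ℝ, Real.exp (-(1/2) * ((y - m) ⬝ᵥ A.mulVec (y - m)))) • m := by
  have t1 := integral_add_right_eq_self (μ := volume)
    (fun y : Fin d → ℝ => Real.exp (-(1/2) * ((y - m) ⬝ᵥ A.mulVec (y - m))) • y) m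
  have t2 := integral_add_right_eq_self (μ := volume)
    (fun y : Fin d → ℝ => Real.exp (-(1/2) * ((y - m) ⬝ᵥ A.mulVec (y - m)))) m
  simp only [add_sub_cancel_right] at t1 t2
  rw [← t1, ← t2]
  have hsplit : (fun z : Fin d → ℝ => Real.exp (-(1/2) * (z ⬝ᵥ A.mulVec z)) • (z + m))
      = (fun z : Fin d → ℝ => Real.exp (-(1/2) * (z ⬝ᵥ A.mulVec z)) • z
          + Real.exp (-(1/2) * (z ⬝ᵥ A.mulVec z)) • m) := by
    funext z; rw [smul_add]
  rw [hsplit, integral_add (integrable_exp_quad_smul hA) ((integrable_exp_quad hA).smul_const m),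
    integral_exp_quad_smul_zero, zero_add, integral_smul_const]

lemma integrable_exp_quad' {d : ℕ} {A : Matrix (Fin d) (Fin d) ℝ} (hA : A.PosDef) (m : Fin d → ℝ) :
    Integrable (fun y : Fin d → ℝ => Real.exp (-(1/2) * ((y - m) ⬝ᵥ A.mulVec (y - m)))) :=
  (integrable_exp_quad hA).comp_sub_right m

lemma integrable_exp_quad_smul' {d : ℕ} {A : Matrix (Fin d) (Fin d) ℝ} (hA : A.PosDef) (m : Fin d → ℝ) :
    Integrable (fun y : Fin d → ℝ => Real.exp (-(1/2) * ((y - m) ⬝ᵥ A.mulVec (y - m))) • y) := by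
  have h1 : Integrable (fun z : Fin d → ℝ => Real.exp (-(1/2) * (z ⬝ᵥ A.mulVec z)) • (z + m)) := by
    have := (integrable_exp_quad_smul hA).add ((integrable_exp_quad hA).smul_const m)
    apply this.congr
    filter_upwards with z
    simp only [Pi.add_apply, smul_add]
  have h2 := h1.comp_sub_right m
  apply h2.congr
  filter_upwards with y
  simp only [sub_add_cancel]

lemma dot_symm {d : ℕ} {M : Matrix (Fin d) (Fin d) ℝ} (hM : Mᵀ = M) (v w : Fin d → ℝ) :
    v ⬝ᵥ M.mulVec w = w ⬝ᵥ M.mulVec v := by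
  rw [Matrix.dotProduct_mulVec]
  nth_rewrite 1 [← hM]
  rw [Matrix.vecMul_transpose, dotProduct_comm]

lemma dot_shift {d : ℕ} (K : Matrix (Fin d) (Fin d) ℝ) (u y : Fin d → ℝ) :
    u ⬝ᵥ K.mulVec y = (Kᵀ.mulVec u) ⬝ᵥ y := by
  rw [Matrix.dotProduct_mulVec, ← Matrix.mulVec_transpose]

lemma exponent_id {d : ℕ} (S' K A : Matrix (Fin d) (Fin d) ℝ) (u α m b : Fin d → ℝ)
    (hS' : S'ᵀ = S') (hA : Aᵀ = A)
    (hAdef : ∀ y : Fin d → ℝ, A.mulVec y = S'.mulVec y + (2:ℝ) • (Kᵀ.mulVec (K.mulVec y)))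
    (hb : b = S'.mulVec α + (2:ℝ) • Kᵀ.mulVec u)
    (hm : A.mulVec m = b) (y : Fin d → ℝ) :
    -((u - K.mulVec y) ⬝ᵥ (u - K.mulVec y)) + (-(1/2) * ((y - α) ⬝ᵥ S'.mulVec (y - α)))
      = (-(u ⬝ᵥ u) - (1/2) * (α ⬝ᵥ S'.mulVec α) + (1/2) * (m ⬝ᵥ b))
        + (-(1/2) * ((y - m) ⬝ᵥ A.mulVec (y - m))) := by
  have h_yKtu : ∀ v w : Fin d → ℝ, v ⬝ᵥ Kᵀ.mulVec w = (K.mulVec v) ⬝ᵥ w := by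
    intro v w
    rw [dot_shift, Matrix.transpose_transpose]
  have h_yAy : y ⬝ᵥ A.mulVec y
      = y ⬝ᵥ S'.mulVec y + 2 * ((K.mulVec y) ⬝ᵥ (K.mulVec y)) := by
    rw [hAdef, dotProduct_add, dotProduct_smul, h_yKtu, smul_eq_mul]
  have h_yAm : y ⬝ᵥ A.mulVec m = y ⬝ᵥ S'.mulVec α + 2 * (u ⬝ᵥ K.mulVec y) := by
    rw [hm, hb, dotProduct_add, dotProduct_smul, h_yKtu, smul_eq_mul,
      dotProduct_comm (K.mulVec y) u]
  have h_mAy : m ⬝ᵥ A.mulVec y = y ⬝ᵥ A.mulVec m := dot_symm hA m y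
  have h_mAm : m ⬝ᵥ A.mulVec m = m ⬝ᵥ b := by rw [hm]
  have h_aSy : α ⬝ᵥ S'.mulVec y = y ⬝ᵥ S'.mulVec α := dot_symm hS' α y
  have h_ru : (K.mulVec y) ⬝ᵥ u = u ⬝ᵥ K.mulVec y := dotProduct_comm _ _
  simp only [sub_dotProduct, dotProduct_sub, Matrix.mulVec_sub]
  linarith




/-- For a nondegenerate Gaussian `μ = N(α, Σ)` on `ℝ^d` (written through its unnormalized
density `g`), the L2 self-attention velocity field satisfies
`Γ_μ(x) = ∫ Vy e^{−‖Qx−Ky‖²} dμ(y) / ∫ e^{−‖Qx−Ky‖²} dμ(y)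
        = V (Σ⁻¹ + 2KᵀK)⁻¹ (Σ⁻¹α + 2KᵀQ x)`,
stated as: numerator = denominator • (closed form). -/
theorem stmt_11 (d : ℕ) (Q K V : Matrix (Fin d) (Fin d) ℝ)
    (α : Fin d → ℝ) (S : Matrix (Fin d) (Fin d) ℝ) (hS : S.PosDef)
    (g : (Fin d → ℝ) → ℝ)
    (hg : ∀ y, g y = Real.exp (-(1 / 2 : ℝ) * ((y - α) ⬝ᵥ S⁻¹.mulVec (y - α)))) :
    ∀ x : Fin d → ℝ,
      (∫ y : Fin d → ℝ,
          (Real.exp (-((Q.mulVec x - K.mulVec y) ⬝ᵥ (Q.mulVec x - K.mulVec y))) * g y) •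
            V.mulVec y) =
        (∫ y : Fin d → ℝ,
            Real.exp (-((Q.mulVec x - K.mulVec y) ⬝ᵥ (Q.mulVec x - K.mulVec y))) * g y) •
          V.mulVec ((S⁻¹ + (2 : ℝ) • (Kᵀ * K))⁻¹.mulVec
            (S⁻¹.mulVec α + (2 : ℝ) • (Kᵀ * Q).mulVec x)) := by
  intro x
  set u := Q.mulVec x with hu
  set A := S⁻¹ + (2:ℝ) • (Kᵀ * K) with hAdef
  set b := S⁻¹.mulVec α + (2:ℝ) • (Kᵀ * Q).mulVec x with hbdef
  set m := A⁻¹.mulVec b with hmdef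
  have hSinv : (S⁻¹).PosDef := hS.inv
  have hKtK : ((2:ℝ) • (Kᵀ * K)).PosSemidef := by
    have h0 : (Kᵀ * K).PosSemidef := by
      simpa using Matrix.posSemidef_conjTranspose_mul_self K
    rw [(by norm_num : (2:ℝ) = 1 + 1), add_smul, one_smul]
    exact h0.add h0
  have hA : A.PosDef := hSinv.add_posSemidef hKtK
  have hS't : (S⁻¹)ᵀ = S⁻¹ := by
    rw [← Matrix.conjTranspose_eq_transpose_of_trivial]
    exact hSinv.isHermitian
  have hAt : Aᵀ = A := by
    rw [← Matrix.conjTranspose_eq_transpose_of_trivial]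
    exact hA.isHermitian
  have hm : A.mulVec m = b := by
    rw [hmdef, Matrix.mulVec_mulVec, Matrix.mul_nonsing_inv _ hA.det_pos.ne'.isUnit,
      Matrix.one_mulVec]
  have hAmul : ∀ y : Fin d → ℝ,
      A.mulVec y = S⁻¹.mulVec y + (2:ℝ) • (Kᵀ.mulVec (K.mulVec y)) := by
    intro y
    rw [hAdef, Matrix.add_mulVec, Matrix.smul_mulVec, Matrix.mulVec_mulVec]
  have hbeq : b = S⁻¹.mulVec α + (2:ℝ) • Kᵀ.mulVec u := by
    rw [hbdef, hu, Matrix.mulVec_mulVec]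
  set C := -(u ⬝ᵥ u) - (1/2) * (α ⬝ᵥ S⁻¹.mulVec α) + (1/2) * (m ⬝ᵥ b) with hC
  set E : (Fin d → ℝ) → ℝ := fun y => -(1/2 : ℝ) * ((y - m) ⬝ᵥ A.mulVec (y - m)) with hE
  have hint : ∀ y : Fin d → ℝ,
      Real.exp (-((u - K.mulVec y) ⬝ᵥ (u - K.mulVec y))) * g y
        = Real.exp C * Real.exp (E y) := by
    intro y
    rw [hg, ← Real.exp_add, ← Real.exp_add]
    congr 1
    have := exponent_id S⁻¹ K A u α m b hS't hAt hAmul hbeq hm y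
    rw [hE]
    push_cast
    linarith [this]
  let L : (Fin d → ℝ) →L[ℝ] (Fin d → ℝ) := LinearMap.toContinuousLinearMap (Matrix.mulVecLin V)
  have hL : ∀ v, L v = V.mulVec v := fun v => rfl
  have hintegrand1 : (fun y : Fin d → ℝ =>
      (Real.exp (-((u - K.mulVec y) ⬝ᵥ (u - K.mulVec y))) * g y) • V.mulVec y)
      = fun y => Real.exp C • L (Real.exp (E y) • y) := by
    funext y
    rw [hint y, mul_smul, hL, Matrix.mulVec_smul]
  have hintegrand2 : (fun y : Fin d → ℝ =>
      Real.exp (-((u - K.mulVec y) ⬝ᵥ (u - K.mulVec y))) * g y)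
      = fun y => Real.exp C * Real.exp (E y) := funext hint
  rw [hintegrand1, hintegrand2, integral_smul, integral_const_mul]
  have hcomm : ∫ y : Fin d → ℝ, L (Real.exp (E y) • y)
      = L (∫ y : Fin d → ℝ, Real.exp (E y) • y) :=
    L.integral_comp_comm (integrable_exp_quad_smul' hA m)
  rw [hcomm]
  have hkey : (∫ y : Fin d → ℝ, Real.exp (E y) • y)
      = (∫ y : Fin d → ℝ, Real.exp (E y)) • m := key_integral hA m
  rw [hkey, hL, Matrix.mulVec_smul, smul_smul]
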